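/- Let (Ω, ℱ, P) be a probability space, 𝒢 ⊆ ℱ a sub-σ-algebra, and S_1 : Ω → ℝ an integrable random variable with S_1 > 0 P-almost surely and mean m = E_P[S_1] ∈ (0,∞). Let S_0 := E_P[S_1 | 𝒢] and let μ_0 denote the law of S_0 under P. Define the probability measure P̃ := (S_1/m)·P. Then S_0 > 0 P-almost surely, μ_0 is a Borel probability measure on (0,∞) with mean m, and the law of the random variable m/S_0 under P̃ equals Id_‡μ_0. -/

import Mathlib

open MeasureTheory Set

/-- The reflected measure `Id_† μ`: the pushforward under `x ↦ 1/x` of the measure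
with density `x / m` with respect to `μ`, where `m = ∫ x ∂μ` is the mean of `μ`. -/
noncomputable def reflect (μ : Measure ℝ) : Measure ℝ :=
  Measure.map (fun x => x⁻¹) (μ.withDensity (fun x => ENNReal.ofReal (x / ∫ y, y ∂μ)))

/-- The normalised reflected measure `Id_‡ μ := Id_† μ̃`, where `μ̃` is the pushforward
of `μ` under `x ↦ x/m` and `m = ∫ x ∂μ`. -/
noncomputable def reflectNorm (μ : Measure ℝ) : Measure ℝ :=
  reflect (Measure.map (fun x => x / ∫ y, y ∂μ) μ)

lemma map_withDensity' {α β : Type*} [MeasurableSpace α] [MeasurableSpace β]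
    (μ : Measure α) {f : α → β} (hf : Measurable f) {g : β → ENNReal} (hg : Measurable g) :
    (μ.map f).withDensity g = (μ.withDensity (g ∘ f)).map f := by
  ext s hs
  rw [withDensity_apply _ hs, Measure.map_apply hf hs, withDensity_apply _ (hf hs),
    Measure.restrict_map hf hs, lintegral_map hg hf]
  rfl

/-- Let `S₁ > 0` a.s. be integrable with mean `m ∈ (0,∞)`, `𝒢 ⊆ ℱ` a sub-σ-algebra,
`S₀ = E_P[S₁|𝒢]` with law `μ₀`, and `P̃ := (S₁/m)·P`. Then `S₀ > 0` a.s., `μ₀` is a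
Borel probability measure on `(0,∞)` with mean `m`, and the law of `m/S₀` under `P̃`
equals `Id_‡ μ₀`. -/
theorem stmt9 {Ω : Type*} (𝒢 : MeasurableSpace Ω) {m0 : MeasurableSpace Ω}
    (P : @Measure Ω m0) [IsProbabilityMeasure P] (h𝒢 : 𝒢 ≤ m0)
    (S₁ : Ω → ℝ) (hint : Integrable S₁ P) (hpos : ∀ᵐ ω ∂P, 0 < S₁ ω)
    (m : ℝ) (hm : m = ∫ ω, S₁ ω ∂P) (hmpos : 0 < m)
    (S₀ : Ω → ℝ) (hS₀ : S₀ = P[S₁ | 𝒢])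
    (μ₀ : Measure ℝ) (hμ₀ : μ₀ = P.map S₀) :
    (∀ᵐ ω ∂P, 0 < S₀ ω) ∧
    IsProbabilityMeasure μ₀ ∧
    μ₀ (Set.Ioi (0:ℝ))ᶜ = 0 ∧
    (∫ x, x ∂μ₀) = m ∧
    (P.withDensity (fun ω => ENNReal.ofReal (S₁ ω / m))).map (fun ω => m / S₀ ω)
      = reflectNorm μ₀ := by
  subst hμ₀
  have hS₀sm : StronglyMeasurable[𝒢] S₀ := hS₀ ▸ stronglyMeasurable_condExp
  have hS₀int : Integrable S₀ P := hS₀ ▸ integrable_condExp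
  have hS₀m𝒢 : Measurable[𝒢] S₀ := hS₀sm.measurable
  have hS₀m : Measurable S₀ := hS₀m𝒢.mono h𝒢 le_rfl
  subst hS₀
  set S₀ : Ω → ℝ := P[S₁ | 𝒢] with hS₀def
  -- positivity of S₀
  have hA𝒢 : MeasurableSet[𝒢] {ω | S₀ ω ≤ 0} := hS₀m𝒢 measurableSet_Iic
  have hA : MeasurableSet {ω | S₀ ω ≤ 0} := h𝒢 _ hA𝒢
  have hkey : ∫ ω in {ω | S₀ ω ≤ 0}, S₀ ω ∂P = ∫ ω in {ω | S₀ ω ≤ 0}, S₁ ω ∂P :=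
    setIntegral_condExp h𝒢 hint hA𝒢
  have hns : P {ω | S₀ ω ≤ 0} = 0 := by
    by_contra h
    have hApos : 0 < P {ω | S₀ ω ≤ 0} := lt_of_le_of_ne zero_le (Ne.symm h)
    have hsupp : P (Function.support S₁)ᶜ = 0 := by
      refine measure_mono_null ?_ (ae_iff.mp hpos)
      intro ω hω
      simp only [Function.mem_support, not_not, mem_compl_iff] at hω
      simp [hω]
    have hsub : {ω | S₀ ω ≤ 0} ⊆
        (Function.support S₁ ∩ {ω | S₀ ω ≤ 0}) ∪ (Function.support S₁)ᶜ := by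
      intro ω hω
      by_cases hω' : ω ∈ Function.support S₁
      · exact Or.inl ⟨hω', hω⟩
      · exact Or.inr hω'
    have hineq : P {ω | S₀ ω ≤ 0} ≤ P (Function.support S₁ ∩ {ω | S₀ ω ≤ 0}) :=
      le_trans (le_trans (measure_mono hsub) (measure_union_le _ _)) (by rw [hsupp, add_zero])
    have hpos' : 0 < ∫ ω in {ω | S₀ ω ≤ 0}, S₁ ω ∂P := by
      rw [setIntegral_pos_iff_support_of_nonneg_ae
        (ae_restrict_of_ae (hpos.mono fun ω hω => hω.le)) hint.integrableOn]
      exact lt_of_lt_of_le hApos hineq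
    have hnonpos : ∫ ω in {ω | S₀ ω ≤ 0}, S₀ ω ∂P ≤ 0 :=
      setIntegral_nonpos hA fun ω hω => hω
    rw [hkey] at hnonpos
    exact absurd hpos' (not_lt.mpr hnonpos)
  have hpos₀ : ∀ᵐ ω ∂P, 0 < S₀ ω := by
    rw [ae_iff]
    simpa using hns
  have hmean : ∫ x, x ∂(P.map S₀) = m := by
    have h1 : ∫ x, x ∂(P.map S₀) = ∫ ω, S₀ ω ∂P :=
      integral_map hS₀m.aemeasurable
        (measurable_id.aestronglyMeasurable : AEStronglyMeasurable (fun x : ℝ => x) _)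
    rw [h1, hS₀def, integral_condExp h𝒢, hm]
  refine ⟨hpos₀, Measure.isProbabilityMeasure_map hS₀m.aemeasurable, ?_, hmean, ?_⟩
  · rw [Measure.map_apply hS₀m measurableSet_Ioi.compl]
    refine measure_mono_null ?_ hns
    intro ω hω
    simpa using hω
  · -- main identity
    have hq : reflectNorm (P.map S₀)
        = (P.withDensity (fun ω => ENNReal.ofReal (S₀ ω / m))).map (fun ω => m / S₀ ω) := by
      have hmean1 : (∫ y, y ∂((P.map S₀).map (fun x => x / m))) = 1 := by
        have h1 : ∫ y, y ∂((P.map S₀).map (fun x => x / m)) = ∫ x, x / m ∂(P.map S₀) :=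
          integral_map (measurable_div_const m).aemeasurable
            (measurable_id.aestronglyMeasurable : AEStronglyMeasurable (fun x : ℝ => x) _)
        rw [h1, integral_div, hmean, div_self hmpos.ne']
      rw [reflectNorm, hmean, reflect, hmean1]
      simp only [div_one]
      rw [map_withDensity' (P.map S₀) (measurable_div_const m) ENNReal.measurable_ofReal,
        map_withDensity' P hS₀m
          (ENNReal.measurable_ofReal.comp (measurable_div_const m)),
        Measure.map_map (measurable_div_const m) hS₀m,
        Measure.map_map measurable_inv ((measurable_div_const m).comp hS₀m)]
      have hfun : (fun x : ℝ => x⁻¹) ∘ ((fun x => x / m) ∘ S₀) = fun ω => m / S₀ ω := by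
        funext ω; simp [Function.comp, inv_div]
      have hfun2 : ((ENNReal.ofReal ∘ fun x => x / m) ∘ S₀)
          = fun ω => ENNReal.ofReal (S₀ ω / m) := rfl
      rw [hfun, hfun2]
    rw [hq]
    refine Measure.ext fun s hs => ?_
    have hf𝒢 : Measurable[𝒢] fun ω => m / S₀ ω := measurable_const.div hS₀m𝒢
    have hfm : Measurable fun ω => m / S₀ ω := measurable_const.div hS₀m
    rw [Measure.map_apply hfm hs, Measure.map_apply hfm hs]
    set t := (fun ω => m / S₀ ω) ⁻¹' s with ht
    have ht𝒢 : MeasurableSet[𝒢] t := hf𝒢 hs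
    have htm : MeasurableSet t := h𝒢 _ ht𝒢
    rw [withDensity_apply _ htm, withDensity_apply _ htm]
    have e1 : ENNReal.ofReal (∫ ω in t, S₁ ω / m ∂P)
        = ∫⁻ ω in t, ENNReal.ofReal (S₁ ω / m) ∂P :=
      ofReal_integral_eq_lintegral_ofReal ((hint.div_const m).restrict)
        (ae_restrict_of_ae (hpos.mono fun ω hω => div_nonneg hω.le hmpos.le))
    have e0 : ENNReal.ofReal (∫ ω in t, S₀ ω / m ∂P)
        = ∫⁻ ω in t, ENNReal.ofReal (S₀ ω / m) ∂P :=
      ofReal_integral_eq_lintegral_ofReal ((hS₀int.div_const m).restrict)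
        (ae_restrict_of_ae (hpos₀.mono fun ω hω => div_nonneg hω.le hmpos.le))
    rw [← e1, ← e0, integral_div, integral_div, setIntegral_condExp h𝒢 hint ht𝒢]
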